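/- Let M > 0, U₀ > 0, and let f : [1, ∞) → ℝ be continuous with |f(v)| ≤ C·v^{−3} for some C > 0 (for all v ≥ 1). Suppose φ : [−U₀, ∞) × [1, ∞) → ℝ and r : [−U₀, ∞) × [1, ∞) → (0, ∞) with r(u, v) ≥ max(v/2, 1) whenever u ≤ v/2. If |Φ(u', v)| ≤ C/(1 + max(u',0))² for all u', v (with Φ = rφ), then for every u ≥ 1 and v ≥ 2u, the integral ∫_{−U₀}^{v/2} (2M/r(u',v)³)·|Φ(u',v)| du' is bounded by C'·u^{−3} for a constant C' depending only on M, U₀, C. -/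

import Mathlib

open MeasureTheory

theorem splitting_estimate (M U₀ C : ℝ) (hM : 0 < M) (hU₀ : 0 < U₀) (hC : 0 < C)
    (f : ℝ → ℝ) (hfcont : ContinuousOn f (Set.Ici 1))
    (hf : ∀ v ≥ (1:ℝ), |f v| ≤ C * v ^ (-3 : ℝ))
    (φ r : ℝ → ℝ → ℝ)
    (hrpos : ∀ u ∈ Set.Ici (-U₀), ∀ v ∈ Set.Ici (1:ℝ), 0 < r u v)
    (hrlb : ∀ u ∈ Set.Ici (-U₀), ∀ v ∈ Set.Ici (1:ℝ), u ≤ v/2 → max (v/2) 1 ≤ r u v)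
    (hΦ : ∀ u' ∈ Set.Ici (-U₀), ∀ v ∈ Set.Ici (1:ℝ),
      |r u' v * φ u' v| ≤ C / (1 + max u' 0)^2) :
    ∃ C' > 0, ∀ u ≥ (1:ℝ), ∀ v ≥ 2*u,
      (∫ u' in (-U₀)..(v/2), (2*M / (r u' v)^3) * |r u' v * φ u' v|)
        ≤ C' * u ^ (-3 : ℝ) := by
  refine ⟨2*M*C*(U₀+1), by positivity, ?_⟩
  intro u hu v hv
  have hu0 : (0:ℝ) < u := by linarith
  have hv1 : (1:ℝ) ≤ v := by linarith
  have hT : u ≤ v/2 := by linarith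
  have hU0T : -U₀ ≤ v/2 := by linarith
  set g : ℝ → ℝ := fun x => (2*M*C/u^3) * ((1 + max x 0)^2)⁻¹ with hgdef
  have hmax1 : ∀ x : ℝ, (1:ℝ) ≤ 1 + max x 0 := fun x => by
    have := le_max_right x 0; linarith
  have hgcont : Continuous g := by
    apply continuous_const.mul
    apply Continuous.inv₀
    · exact (continuous_const.add (continuous_id.max continuous_const)).pow 2
    · intro x
      have := hmax1 x
      positivity
  have hbound : ∀ x ∈ Set.Icc (-U₀) (v/2),
      (2*M/(r x v)^3) * |r x v * φ x v| ≤ g x := by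
    intro x hx
    have hxI : x ∈ Set.Ici (-U₀) := hx.1
    have hvI : v ∈ Set.Ici (1:ℝ) := hv1
    have hur : u ≤ r x v := by
      have h1 := hrlb x hxI v hvI hx.2
      have h2 : v/2 ≤ max (v/2) 1 := le_max_left _ _
      linarith
    have h1 : 2*M/(r x v)^3 ≤ 2*M/u^3 := by
      gcongr
    have h2 : |r x v * φ x v| ≤ C / (1 + max x 0)^2 := hΦ x hxI v hvI
    calc (2*M/(r x v)^3) * |r x v * φ x v|
        ≤ (2*M/u^3) * (C / (1 + max x 0)^2) :=
          mul_le_mul h1 h2 (abs_nonneg _) (by positivity)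
      _ = g x := by
          show _ = (2*M*C/u^3) * ((1 + max x 0)^2)⁻¹
          ring
  have key : (∫ u' in (-U₀)..(v/2), (2*M / (r u' v)^3) * |r u' v * φ u' v|)
      ≤ ∫ x in (-U₀)..(v/2), g x := by
    by_cases hint : IntervalIntegrable
        (fun u' => (2*M/(r u' v)^3) * |r u' v * φ u' v|) volume (-U₀) (v/2)
    · exact intervalIntegral.integral_mono_on hU0T hint
        (hgcont.intervalIntegrable _ _) hbound
    · rw [intervalIntegral.integral_undef hint]
      apply intervalIntegral.integral_nonneg hU0T
      intro x _
      have := hmax1 x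
      positivity
  -- compute the integral of g
  set h : ℝ → ℝ := fun x => ((1 + max x 0)^2)⁻¹ with hhdef
  have hhcont : Continuous h := by
    apply Continuous.inv₀
    · exact (continuous_const.add (continuous_id.max continuous_const)).pow 2
    · intro x
      have := hmax1 x
      positivity
  have hgsplit : (∫ x in (-U₀)..(v/2), g x)
      = (2*M*C/u^3) * ((∫ x in (-U₀)..(0:ℝ), h x) + ∫ x in (0:ℝ)..(v/2), h x) := by
    have h1 : (∫ x in (-U₀)..(v/2), g x) = (2*M*C/u^3) * ∫ x in (-U₀)..(v/2), h x :=
      intervalIntegral.integral_const_mul _ _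
    rw [h1, ← intervalIntegral.integral_add_adjacent_intervals
      (hhcont.intervalIntegrable (-U₀) 0) (hhcont.intervalIntegrable 0 (v/2))]
  have hI1 : (∫ x in (-U₀)..(0:ℝ), h x) = U₀ := by
    have : (∫ x in (-U₀)..(0:ℝ), h x) = ∫ x in (-U₀)..(0:ℝ), (1:ℝ) := by
      apply intervalIntegral.integral_congr
      intro x hx
      rw [Set.uIcc_of_le (by linarith)] at hx
      have hx0 : x ≤ 0 := hx.2
      simp [hhdef, max_eq_right hx0]
    rw [this]
    simp
  have hI2 : (∫ x in (0:ℝ)..(v/2), h x) ≤ 1 := by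
    have heq : (∫ x in (0:ℝ)..(v/2), h x) = ∫ x in (0:ℝ)..(v/2), ((1+x)^2)⁻¹ := by
      apply intervalIntegral.integral_congr
      intro x hx
      rw [Set.uIcc_of_le (by linarith)] at hx
      simp [hhdef, max_eq_left hx.1]
    have hderiv : ∀ x ∈ Set.uIcc (0:ℝ) (v/2),
        HasDerivAt (fun y => -(1+y)⁻¹) (((1+x)^2)⁻¹) x := by
      intro x hx
      rw [Set.uIcc_of_le (by linarith)] at hx
      have hne : (1:ℝ) + x ≠ 0 := by linarith [hx.1]
      have h1 : HasDerivAt (fun y : ℝ => 1 + y) 1 x := (hasDerivAt_id x).const_add 1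
      have h2 := (h1.inv hne).neg
      exact h2.congr_deriv (by ring)
    have hint : IntervalIntegrable (fun x => ((1+x)^2)⁻¹) volume 0 (v/2) := by
      apply ContinuousOn.intervalIntegrable
      apply ContinuousOn.inv₀
      · exact ((continuous_const.add continuous_id).pow 2).continuousOn
      · intro x hx
        rw [Set.uIcc_of_le (by linarith)] at hx
        have : (1:ℝ) ≤ 1 + x := by linarith [hx.1]
        positivity
    rw [heq, intervalIntegral.integral_eq_sub_of_hasDerivAt hderiv hint]
    have hpos : (0:ℝ) < 1 + v/2 := by linarith
    have : (0:ℝ) ≤ (1 + v/2)⁻¹ := by positivity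
    norm_num
    linarith
  have hu3 : u ^ (-3 : ℝ) = (u^3)⁻¹ := by
    rw [show (-3:ℝ) = -(3:ℕ) by norm_num, Real.rpow_neg hu0.le, Real.rpow_natCast]
  calc (∫ u' in (-U₀)..(v/2), (2*M / (r u' v)^3) * |r u' v * φ u' v|)
      ≤ ∫ x in (-U₀)..(v/2), g x := key
    _ = (2*M*C/u^3) * ((∫ x in (-U₀)..(0:ℝ), h x) + ∫ x in (0:ℝ)..(v/2), h x) := hgsplit
    _ ≤ (2*M*C/u^3) * (U₀ + 1) := by
        rw [hI1]
        apply mul_le_mul_of_nonneg_left (by linarith) (by positivity)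
    _ = 2*M*C*(U₀+1) * u ^ (-3:ℝ) := by rw [hu3]; ring
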